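/- For each j ≥ 1 let φ_j : ℝ × ℂ^{n-1} → ℝ be a C¹-smooth function with φ_j(0, 0) = 0, and set G_j := {(z₁, z') ∈ ℂ × ℂ^{n-1} : Re(z₁) > φ_j(Im(z₁), z')}. Let 𝟏 := (1, 0, …, 0). Assume the sequence {φ_j}_{j≥1} converges uniformly on compact subsets of ℝ × ℂ^{n-1} to a function φ̂ : ℝ × ℂ^{n-1} → ℝ. Then the sequence of pointed domains {(G_j, 𝟏)}_{j≥1} is tamed at 𝟏 and converges in the sense of Carathéodory to the pointed domain (Ĝ, 𝟏), where Ĝ := {(z₁, z') ∈ ℂ × ℂ^{n-1} : Re(z₁) > φ̂(Im(z₁), z')}; in particular, the Carathéodory kernel of every subsequence equals (Ĝ, 𝟏). -/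

import Mathlib

open Filter Topology Set

/-- A pointed domain: `G` is open, connected, and contains `p`. -/
def IsPointedDomain {E : Type*} [TopologicalSpace E] (G : Set E) (p : E) : Prop :=
  IsOpen G ∧ IsConnected G ∧ p ∈ G

/-- A sequence of pointed sets `(G j, p j)` is tamed at `phat` if `p j → phat` and some
open neighborhood of `phat` is contained in `⋂_{j ≥ k} G j` for some `k`. -/
def TamedAt {E : Type*} [TopologicalSpace E] (G : ℕ → Set E) (p : ℕ → E) (phat : E) : Prop :=
  Filter.Tendsto p Filter.atTop (nhds phat) ∧
    ∃ k : ℕ, ∃ U : Set E, IsOpen U ∧ phat ∈ U ∧ U ⊆ ⋂ j, ⋂ (_ : k ≤ j), G j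

/-- The underlying set of the Carathéodory kernel of a sequence of sets, at the point `phat`:
`⋃_{k} Conn_{phat} ((⋂_{j ≥ k} G j)°)`. -/
def kernelSet {E : Type*} [TopologicalSpace E] (G : ℕ → Set E) (phat : E) : Set E :=
  ⋃ k : ℕ, connectedComponentIn (interior (⋂ j, ⋂ (_ : k ≤ j), G j)) phat

/-- Let `G j := {Re z₁ > φ j (Im z₁, z')}` for `C¹`-smooth functions `φ j` with
`φ j (0,0) = 0`, converging uniformly on compact subsets of `ℝ × ℂ^{n-1}` to `φhat`.
Then the pointed domains `(G j, 𝟏)` are tamed at `𝟏 = (1,0,…,0)` and converge in the sense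
of Carathéodory to the pointed domain `(Ghat, 𝟏)` where `Ghat := {Re z₁ > φhat (Im z₁, z')}`:
the Carathéodory kernel of every subsequence equals `(Ghat, 𝟏)`. -/
theorem kernel_of_graph_domains {m : ℕ}
    (φ : ℕ → (ℝ × (Fin m → ℂ)) → ℝ)
    (hsmooth : ∀ j, ContDiff ℝ 1 (φ j))
    (hzero : ∀ j, φ j (0, 0) = 0)
    (φhat : (ℝ × (Fin m → ℂ)) → ℝ)
    (hconv : ∀ K : Set (ℝ × (Fin m → ℂ)), IsCompact K →
      TendstoUniformlyOn (fun j => φ j) φhat Filter.atTop K)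
    (G : ℕ → Set (ℂ × (Fin m → ℂ)))
    (hG : ∀ j, G j = {z : ℂ × (Fin m → ℂ) | φ j (z.1.im, z.2) < z.1.re})
    (Ghat : Set (ℂ × (Fin m → ℂ)))
    (hGhat : Ghat = {z : ℂ × (Fin m → ℂ) | φhat (z.1.im, z.2) < z.1.re})
    (one : ℂ × (Fin m → ℂ)) (hone : one = ((1 : ℂ), 0)) :
    TamedAt G (fun _ => one) one ∧ IsPointedDomain Ghat one ∧
      ∀ ψ : ℕ → ℕ, StrictMono ψ → kernelSet (G ∘ ψ) one = Ghat := by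
  have hφcont : ∀ j, Continuous (φ j) := fun j => (hsmooth j).continuous
  -- continuity of the limit
  have hφhat : Continuous φhat := by
    refine TendstoLocallyUniformly.continuous (F := fun j => φ j) (p := atTop) ?_ ?_
    · exact tendstoLocallyUniformly_iff_forall_isCompact.mpr fun K hK => hconv K hK
    · exact (Filter.Eventually.of_forall hφcont).frequently
  -- pointwise convergence
  have hpt : ∀ x, Tendsto (fun j => φ j x) atTop (nhds (φhat x)) := fun x =>
    (hconv {x} isCompact_singleton).tendsto_at rfl
  have hφhat0 : φhat (0, 0) = 0 := by
    refine tendsto_nhds_unique (hpt (0, 0)) ?_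
    have : (fun j => φ j (0, 0)) = fun _ => (0 : ℝ) := funext hzero
    rw [this]; exact tendsto_const_nhds
  have hφhat0' : φhat 0 = 0 := by rwa [Prod.mk_zero_zero] at hφhat0
  -- the projection and the graph parametrization
  set p : ℂ × (Fin m → ℂ) → ℝ × (Fin m → ℂ) := fun z => (z.1.im, z.2) with hp
  have hpcont : Continuous p :=
    (Complex.continuous_im.comp continuous_fst).prodMk continuous_snd
  set h : ℝ × (ℝ × (Fin m → ℂ)) → ℂ × (Fin m → ℂ) :=
    fun q => ((q.1 + φhat q.2 : ℝ) + (q.2.1 : ℂ) * Complex.I, q.2.2) with hh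
  have hhcont : Continuous h := by
    refine Continuous.prodMk ?_ (continuous_snd.snd)
    exact (Complex.continuous_ofReal.comp (continuous_fst.add (hφhat.comp continuous_snd))).add
      ((Complex.continuous_ofReal.comp (continuous_snd.fst)).mul continuous_const)
  have hre : ∀ a b : ℝ, ((a : ℂ) + (b : ℂ) * Complex.I).re = a := by intro a b; simp
  have him : ∀ a b : ℝ, ((a : ℂ) + (b : ℂ) * Complex.I).im = b := by intro a b; simp
  -- characterization of images under h
  have himage : ∀ (s : Set ℝ) (t : Set (ℝ × (Fin m → ℂ))),
      h '' (s ×ˢ t) = {w | w.1.re - φhat (p w) ∈ s ∧ p w ∈ t} := by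
    intro s t
    ext w
    constructor
    · rintro ⟨q, ⟨hq1, hq2⟩, rfl⟩
      have hpw : p (h q) = q.2 := by
        simp only [hp, hh]
        exact Prod.ext (him _ _) rfl
      constructor
      · rw [hpw]
        simpa [hh, hre] using hq1
      · rw [hpw]; exact hq2
    · rintro ⟨hw1, hw2⟩
      refine ⟨(w.1.re - φhat (p w), p w), ⟨hw1, hw2⟩, ?_⟩
      apply Prod.ext
      · show ((w.1.re - φhat (p w) + φhat (p w) : ℝ) : ℂ) + (w.1.im : ℂ) * Complex.I = w.1
        rw [sub_add_cancel, Complex.re_add_im]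
      · rfl
  have honeG : one ∈ Ghat := by
    rw [hGhat, hone]
    show φhat ((1 : ℂ).im, 0) < (1 : ℂ).re
    simp [hφhat0, hφhat0']
  have hGhat_open : IsOpen Ghat := by
    rw [hGhat]
    exact isOpen_lt (hφhat.comp hpcont) (Complex.continuous_re.comp continuous_fst)
  refine ⟨?_, ⟨hGhat_open, ?_, honeG⟩, ?_⟩
  · -- Tamed
    refine ⟨tendsto_const_nhds, ?_⟩
    have h14 := (Metric.tendstoUniformlyOn_iff.mp
      (hconv (Metric.closedBall 0 1) (isCompact_closedBall 0 1))) (1/4) (by norm_num)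
    obtain ⟨k, hk⟩ := eventually_atTop.mp h14
    obtain ⟨δ, hδpos, hδ⟩ := Metric.continuous_iff.mp hφhat (0, 0) (1/4) (by norm_num)
    refine ⟨k, {z | 1/2 < z.1.re} ∩ p ⁻¹' Metric.ball 0 (min δ 1), ?_, ?_, ?_⟩
    · exact (isOpen_lt continuous_const (Complex.continuous_re.comp continuous_fst)).inter
        (Metric.isOpen_ball.preimage hpcont)
    · constructor
      · rw [hone]; norm_num
      · rw [hone]
        show ((1 : ℂ).im, (0 : Fin m → ℂ)) ∈ Metric.ball 0 (min δ 1)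
        simp [Metric.mem_ball, lt_min_iff, hδpos]
    · intro z hz
      obtain ⟨hz1, hz2⟩ := hz
      simp only [Set.mem_preimage, Metric.mem_ball] at hz2
      refine Set.mem_iInter.mpr fun j => Set.mem_iInter.mpr fun hj => ?_
      rw [hG]
      show φ j (p z) < z.1.re
      have hx1 : p z ∈ Metric.closedBall (0 : ℝ × (Fin m → ℂ)) 1 :=
        Metric.mem_closedBall.mpr (le_of_lt (lt_of_lt_of_le hz2 (min_le_right _ _)))
      have h1 : dist (φhat (p z)) (φ j (p z)) < 1/4 := hk j hj (p z) hx1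
      have h2 : dist (φhat (p z)) (φhat (0, 0)) < 1/4 :=
        hδ (p z) (lt_of_lt_of_le hz2 (min_le_left _ _))
      rw [Real.dist_eq] at h1 h2
      rw [hφhat0] at h2
      have h1' := abs_lt.mp h1
      have h2' := abs_lt.mp h2
      simp only [Set.mem_setOf_eq] at hz1
      simp only [sub_zero] at h2'
      linarith [h1'.1, h1'.2, h2'.1, h2'.2]
  · -- Ghat connected
    have : Ghat = h '' (Ioi (0 : ℝ) ×ˢ univ) := by
      rw [himage, hGhat]
      ext w
      simp [sub_pos]
      exact Iff.rfl
    rw [this]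
    refine IsConnected.image ?_ h hhcont.continuousOn
    exact isConnected_Ioi.prod ⟨univ_nonempty,
      (convex_univ : Convex ℝ (univ : Set (ℝ × (Fin m → ℂ)))).isPreconnected⟩
  · -- kernel
    intro ψ hψ
    have hle : ∀ k, ∀ w ∈ (⋂ j, ⋂ (_ : k ≤ j), (G ∘ ψ) j), φhat (p w) ≤ w.1.re := by
      intro k w hw
      refine le_of_tendsto ((hpt (p w)).comp hψ.tendsto_atTop) ?_
      filter_upwards [eventually_ge_atTop k] with j hj
      have := Set.mem_iInter.mp (Set.mem_iInter.mp hw j) hj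
      simp only [Function.comp_apply, hG] at this
      exact le_of_lt this
    apply subset_antisymm
    · -- kernel ⊆ Ghat
      refine iUnion_subset fun k => (connectedComponentIn_subset _ _).trans ?_
      intro z hz
      obtain ⟨ε, hε, hball⟩ := Metric.isOpen_iff.mp isOpen_interior z hz
      have hwmem : ((z.1 - ((ε/2 : ℝ) : ℂ), z.2) : ℂ × (Fin m → ℂ)) ∈
          ⋂ j, ⋂ (_ : k ≤ j), (G ∘ ψ) j := by
        refine interior_subset (hball ?_)
        rw [Metric.mem_ball, Prod.dist_eq]
        have : dist (z.1 - ((ε/2 : ℝ) : ℂ)) z.1 = ε/2 := by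
          rw [Complex.dist_eq]
          have : z.1 - ((ε/2 : ℝ) : ℂ) - z.1 = -((ε/2 : ℝ) : ℂ) := by ring
          rw [this]
          simp [abs_of_pos hε]
        rw [this]
        simp only [dist_self]
        exact max_lt (by linarith) (by linarith)
      have := hle k _ hwmem
      simp only [hp] at this
      simp only [Complex.sub_im, Complex.ofReal_im, sub_zero, Complex.sub_re,
        Complex.ofReal_re] at this
      rw [hGhat]
      show φhat (z.1.im, z.2) < z.1.re
      linarith
    · -- Ghat ⊆ kernel
      intro z hz
      rw [hGhat] at hz
      have hr : 0 < z.1.re - φhat (p z) := by simpa [hp, sub_pos] using hz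
      set a : ℝ := min (z.1.re - φhat (p z)) 1 with ha
      have hapos : 0 < a := lt_min hr one_pos
      set ε : ℝ := a / 2 with hε
      have hεpos : 0 < ε := by positivity
      set R : ℝ := ‖p z‖ + 1 with hR
      have hRpos : 0 < R := by positivity
      have huc := (Metric.tendstoUniformlyOn_iff.mp
        (hconv (Metric.closedBall 0 R) (isCompact_closedBall 0 R))) ε hεpos
      obtain ⟨k, hk⟩ := eventually_atTop.mp huc
      set T : Set (ℂ × (Fin m → ℂ)) := h '' (Ioi ε ×ˢ Metric.ball 0 R) with hT
      have hTchar : T = {w | w.1.re - φhat (p w) ∈ Ioi ε ∧ p w ∈ Metric.ball 0 R} :=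
        himage _ _
      have hTopen : IsOpen T := by
        rw [hTchar]
        exact (isOpen_lt continuous_const
          ((Complex.continuous_re.comp continuous_fst).sub (hφhat.comp hpcont))).inter
          (Metric.isOpen_ball.preimage hpcont)
      have hTsub : T ⊆ ⋂ j, ⋂ (_ : k ≤ j), (G ∘ ψ) j := by
        intro w hw
        rw [hTchar] at hw
        obtain ⟨hw1, hw2⟩ := hw
        refine Set.mem_iInter.mpr fun j => Set.mem_iInter.mpr fun hj => ?_
        simp only [Function.comp_apply, hG]
        show φ (ψ j) (p w) < w.1.re
        have hjk : k ≤ ψ j := le_trans hj (hψ.le_apply)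
        have hd : dist (φhat (p w)) (φ (ψ j) (p w)) < ε :=
          hk (ψ j) hjk (p w) (Metric.ball_subset_closedBall hw2)
        rw [Real.dist_eq] at hd
        have := (abs_lt.mp hd).1
        simp only [Set.mem_Ioi] at hw1
        linarith
      have hTconn : IsPreconnected T := by
        refine (IsConnected.image ?_ h hhcont.continuousOn).isPreconnected
        exact isConnected_Ioi.prod ⟨Metric.nonempty_ball.mpr hRpos,
          (convex_ball (0 : ℝ × (Fin m → ℂ)) R).isPreconnected⟩
      have honeT : one ∈ T := by
        rw [hTchar]
        constructor
        · show ε < one.1.re - φhat (p one)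
          have hp1 : p one = (0, 0) := by rw [hone]; simp [hp]
          rw [hp1, hφhat0, hone]
          simp only [Complex.one_re, sub_zero]
          have : a ≤ 1 := min_le_right _ _
          rw [hε]; linarith
        · have hp1 : p one = (0, 0) := by rw [hone]; simp [hp]
          rw [hp1]
          simp [Metric.mem_ball, hRpos]
      have hzT : z ∈ T := by
        rw [hTchar]
        constructor
        · show ε < z.1.re - φhat (p z)
          have : a ≤ z.1.re - φhat (p z) := min_le_left _ _
          rw [hε]; linarith
        · show p z ∈ Metric.ball 0 R
          rw [Metric.mem_ball, dist_zero_right, hR]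
          linarith
      refine Set.mem_iUnion.mpr ⟨k, ?_⟩
      exact hTconn.subset_connectedComponentIn honeT (interior_maximal hTsub hTopen) hzT
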